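/- Let ε>1, 0<x<1, and set ψ(x,t)=ε·log(1−xt)−log(1−t), t_s=(εx−1)/((ε−1)x), δ=εx−1, and α=sgn(δ)·(−2ψ(x,t_s))^{1/2}. Then as δ→0, α = (ε/(ε−1))^{1/2}·δ − (ε/(ε−1))^{1/2}·(ε−2)·δ²/(3(ε−1)) + O(δ³). In particular, for every b>0, lim_{x→1/ε} (α/(εx−1))^{b} = (ε/(ε−1))^{b/2}. -/

import Mathlib

open Real Filter Topology Asymptotics

/-- `ψ(x, t_s)` where `ψ(x,t) = ε log(1-xt) - log(1-t)` and `t_s = (εx-1)/((ε-1)x)`. -/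
noncomputable def psiSaddle (ε x : ℝ) : ℝ :=
  ε * Real.log (1 - x * ((ε * x - 1) / ((ε - 1) * x)))
    - Real.log (1 - (ε * x - 1) / ((ε - 1) * x))

/-- `α = sgn(εx-1) (-2 ψ(x,t_s))^{1/2}`. -/
noncomputable def alph (ε x : ℝ) : ℝ :=
  Real.sign (ε * x - 1) * Real.sqrt (-2 * psiSaddle ε x)

lemma psiSaddle_eq {ε δ : ℝ} (hε : 1 < ε) (h1 : -1 < δ) (h2 : δ < ε - 1) :
    psiSaddle ε ((1 + δ) / ε) =
      (ε - 1) * Real.log (1 - δ / (ε - 1)) + Real.log (1 + δ) := by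
  have hε0 : (0:ℝ) < ε := by linarith
  have ha : (0:ℝ) < ε - 1 := by linarith
  have h1' : (0:ℝ) < 1 + δ := by linarith
  have h2' : (0:ℝ) < ε - 1 - δ := by linarith
  unfold psiSaddle
  have e1 : 1 - (1+δ)/ε * ((ε * ((1+δ)/ε) - 1) / ((ε-1) * ((1+δ)/ε))) = (ε-1-δ)/(ε-1) := by
    field_simp; ring
  have e2 : 1 - (ε * ((1+δ)/ε) - 1) / ((ε-1) * ((1+δ)/ε)) = (ε-1-δ)/((ε-1)*(1+δ)) := by
    field_simp; ring
  rw [e1, e2]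
  rw [Real.log_div h2'.ne' ha.ne', Real.log_div h2'.ne' (by positivity),
      Real.log_mul ha.ne' h1'.ne']
  have e3 : 1 - δ/(ε-1) = (ε-1-δ)/(ε-1) := by field_simp
  rw [e3, Real.log_div h2'.ne' ha.ne']
  ring

lemma log_taylor_cubic {x : ℝ} (hx : |x| ≤ 1/2) :
    |Real.log (1 - x) + (x + x^2/2 + x^3/3)| ≤ 2*|x|^4 := by
  have hx1 : |x| < 1 := by linarith
  have h := Real.abs_log_sub_add_sum_range_le hx1 3
  have hsum : ∑ i ∈ Finset.range 3, x ^ (i + 1) / ((i:ℝ) + 1) = x + x^2/2 + x^3/3 := by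
    simp [Finset.sum_range_succ]; ring
  rw [hsum] at h
  have h2 : |x|^(3+1) / (1 - |x|) ≤ 2*|x|^4 := by
    rw [show (3+1) = 4 from rfl, div_le_iff₀ (by linarith : (0:ℝ) < 1 - |x|)]
    have h3 : (0:ℝ) ≤ |x|^4 := by positivity
    nlinarith [mul_nonneg h3 (by linarith : (0:ℝ) ≤ 1 - 2*|x|)]
  calc |Real.log (1-x) + (x + x^2/2 + x^3/3)| = |x + x^2/2 + x^3/3 + Real.log (1-x)| := by
        rw [add_comm]
    _ ≤ 2*|x|^4 := le_trans h h2

lemma scale_helper {a : ℝ} (ha : a ≠ 0) (u : ℝ) : a * (2*(u/a^4)) = 2*u/a^3 := by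
  field_simp

set_option maxHeartbeats 1000000 in
lemma alph_bound {ε : ℝ} (hε : 1 < ε) :
    ∃ C > 0, ∃ r > 0, ∀ δ : ℝ, |δ| < r →
    |alph ε ((1+δ)/ε) - (Real.sqrt (ε/(ε-1)) * δ
        - Real.sqrt (ε/(ε-1)) * (ε-2) * δ^2 / (3*(ε-1)))| ≤ C * |δ|^3 := by
  have hε0 : (0:ℝ) < ε := by linarith
  have ha : (0:ℝ) < ε - 1 := by linarith
  have hane : ε - 1 ≠ 0 := ha.ne'
  have hs : 0 < Real.sqrt (ε/(ε-1)) := Real.sqrt_pos.2 (by positivity)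
  set s : ℝ := Real.sqrt (ε/(ε-1)) with hs_def
  have hsq : s^2 = ε/(ε-1) := Real.sq_sqrt (by positivity)
  -- constants (as plain expressions of ε)
  refine ⟨2*(4*(1+1/(ε-1)^3) + (ε/(ε-1))*((ε-2)/(3*(ε-1)))^2)/s, by positivity,
    min (min (1/2) ((ε-1)/2)) (1/(2*(|(ε-2)/(3*(ε-1))| + 1))), by positivity, fun δ hδ => ?_⟩
  have hδ1 : |δ| ≤ 1/2 :=
    le_of_lt (lt_of_lt_of_le hδ (le_trans (min_le_left _ _) (min_le_left _ _)))
  have hδ2 : |δ| ≤ (ε-1)/2 :=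
    le_of_lt (lt_of_lt_of_le hδ (le_trans (min_le_left _ _) (min_le_right _ _)))
  have hδ3 : |δ| ≤ 1/(2*(|(ε-2)/(3*(ε-1))| + 1)) := le_of_lt (lt_of_lt_of_le hδ (min_le_right _ _))
  obtain ⟨hdl, hdr⟩ := abs_le.1 hδ1
  obtain ⟨hdl2, hdr2⟩ := abs_le.1 hδ2
  have hd1 : -1 < δ := by linarith
  have hd2 : δ < ε - 1 := by linarith
  have h1' : (0:ℝ) < 1 + δ := by linarith
  have h2' : (0:ℝ) < ε - 1 - δ := by linarith
  have hψ := psiSaddle_eq hε hd1 hd2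
  -- estimate A : scaled log
  have hA : |(ε-1) * Real.log (1 - δ/(ε-1)) + (δ + δ^2/(2*(ε-1)) + δ^3/(3*(ε-1)^2))|
      ≤ 2*|δ|^4/(ε-1)^3 := by
    have hxa : |δ/(ε-1)| ≤ 1/2 := by
      rw [abs_div, abs_of_pos ha, div_le_iff₀ ha]; linarith
    have h := log_taylor_cubic hxa
    have hident : (ε-1) * Real.log (1 - δ/(ε-1)) + (δ + δ^2/(2*(ε-1)) + δ^3/(3*(ε-1)^2))
        = (ε-1) * (Real.log (1 - δ/(ε-1)) + (δ/(ε-1) + (δ/(ε-1))^2/2 + (δ/(ε-1))^3/3)) := by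
      field_simp
    rw [hident, abs_mul, abs_of_pos ha]
    have h4 : |δ/(ε-1)|^4 = |δ|^4/(ε-1)^4 := by rw [abs_div, abs_of_pos ha, div_pow]
    calc (ε-1) * |Real.log (1 - δ/(ε-1)) + (δ/(ε-1) + (δ/(ε-1))^2/2 + (δ/(ε-1))^3/3)|
        ≤ (ε-1) * (2*|δ/(ε-1)|^4) := mul_le_mul_of_nonneg_left h (le_of_lt ha)
      _ = 2*|δ|^4/(ε-1)^3 := by rw [h4]; exact scale_helper hane _
  -- estimate B
  have hB : |Real.log (1+δ) + (-δ + δ^2/2 - δ^3/3)| ≤ 2*|δ|^4 := by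
    have hxb : |(-δ)| ≤ 1/2 := by rw [abs_neg]; exact hδ1
    have h := log_taylor_cubic hxb
    have : (1 : ℝ) - -δ = 1 + δ := by ring
    rw [this] at h
    calc |Real.log (1+δ) + (-δ + δ^2/2 - δ^3/3)|
        = |Real.log (1+δ) + (-δ + (-δ)^2/2 + (-δ)^3/3)| := by ring_nf
      _ ≤ 2*|(-δ)|^4 := h
      _ = 2*|δ|^4 := by rw [abs_neg]
  -- F and its estimate
  set F : ℝ := -2 * psiSaddle ε ((1+δ)/ε) with hF_def
  have hFval : F = -2 * ((ε-1) * Real.log (1 - δ/(ε-1)) + Real.log (1+δ)) := by rw [hF_def, hψ]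
  have hF : |F - ((ε/(ε-1))*δ^2 - (2*((ε-1)^2-1)/(3*(ε-1)^2))*δ^3)|
      ≤ (4*(1+1/(ε-1)^3))*|δ|^4 := by
    have hid : F - ((ε/(ε-1))*δ^2 - (2*((ε-1)^2-1)/(3*(ε-1)^2))*δ^3)
        = (-2)*((ε-1) * Real.log (1 - δ/(ε-1)) + (δ + δ^2/(2*(ε-1)) + δ^3/(3*(ε-1)^2)))
          + (-2)*(Real.log (1+δ) + (-δ + δ^2/2 - δ^3/3)) := by
      rw [hFval]; field_simp; ring
    rw [hid]
    calc |(-2)*((ε-1) * Real.log (1 - δ/(ε-1)) + (δ + δ^2/(2*(ε-1)) + δ^3/(3*(ε-1)^2)))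
          + (-2)*(Real.log (1+δ) + (-δ + δ^2/2 - δ^3/3))|
        ≤ |(-2)*((ε-1) * Real.log (1 - δ/(ε-1)) + (δ + δ^2/(2*(ε-1)) + δ^3/(3*(ε-1)^2)))|
          + |(-2)*(Real.log (1+δ) + (-δ + δ^2/2 - δ^3/3))| := abs_add_le _ _
      _ = 2*|(ε-1) * Real.log (1 - δ/(ε-1)) + (δ + δ^2/(2*(ε-1)) + δ^3/(3*(ε-1)^2))|
          + 2*|Real.log (1+δ) + (-δ + δ^2/2 - δ^3/3)| := by
            rw [abs_mul, abs_mul]; norm_num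
      _ ≤ 2*(2*|δ|^4/(ε-1)^3) + 2*(2*|δ|^4) := by gcongr
      _ = (4*(1+1/(ε-1)^3))*|δ|^4 := by field_simp; ring
  -- F is nonnegative
  have hFnn : 0 ≤ F := by
    have l2 : Real.log (1 - δ/(ε-1)) ≤ -(δ/(ε-1)) := by
      have hpos : 0 < 1 - δ/(ε-1) := by
        rw [sub_pos, div_lt_one ha]; linarith
      have := Real.log_le_sub_one_of_pos hpos
      linarith
    have l1 : Real.log (1+δ) ≤ δ := by
      have := Real.log_le_sub_one_of_pos h1'
      linarith
    have : (ε-1) * Real.log (1 - δ/(ε-1)) + Real.log (1+δ) ≤ 0 := by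
      have h2 : (ε-1) * Real.log (1 - δ/(ε-1)) ≤ (ε-1) * (-(δ/(ε-1))) :=
        mul_le_mul_of_nonneg_left l2 (le_of_lt ha)
      have h3 : (ε-1) * (-(δ/(ε-1))) = -δ := by field_simp [mul_comm]
      linarith
    rw [hFval]; linarith
  -- T and its square
  set T : ℝ := s * δ - s * (ε-2) * δ^2 / (3*(ε-1)) with hT_def
  have hT2 : T^2 = (ε/(ε-1))*δ^2 - (2*((ε-1)^2-1)/(3*(ε-1)^2))*δ^3
      + (ε/(ε-1))*((ε-2)/(3*(ε-1)))^2*δ^4 := by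
    have : T^2 = s^2 * (δ - (ε-2)*δ^2/(3*(ε-1)))^2 := by rw [hT_def]; ring
    rw [this, hsq]; field_simp; ring
  have hFT : |F - T^2| ≤ (4*(1+1/(ε-1)^3) + (ε/(ε-1))*((ε-2)/(3*(ε-1)))^2)*|δ|^4 := by
    have hd4 : δ^4 = |δ|^4 := (abs_pow δ 4 ▸ (abs_of_nonneg (by positivity : (0:ℝ) ≤ δ^4))).symm
    calc |F - T^2| = |(F - ((ε/(ε-1))*δ^2 - (2*((ε-1)^2-1)/(3*(ε-1)^2))*δ^3))
          + (-((ε/(ε-1))*((ε-2)/(3*(ε-1)))^2*δ^4))| := by rw [hT2]; ring_nf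
      _ ≤ |F - ((ε/(ε-1))*δ^2 - (2*((ε-1)^2-1)/(3*(ε-1)^2))*δ^3)|
          + |(-((ε/(ε-1))*((ε-2)/(3*(ε-1)))^2*δ^4))| := abs_add_le _ _
      _ ≤ (4*(1+1/(ε-1)^3))*|δ|^4 + (ε/(ε-1))*((ε-2)/(3*(ε-1)))^2*|δ|^4 := by
          refine add_le_add hF ?_
          rw [abs_neg, abs_of_nonneg (by positivity), hd4]
      _ = (4*(1+1/(ε-1)^3) + (ε/(ε-1))*((ε-2)/(3*(ε-1)))^2)*|δ|^4 := by ring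
  -- alph value
  have hxval : ε * ((1+δ)/ε) - 1 = δ := by field_simp; ring
  have hαval : alph ε ((1+δ)/ε) = Real.sign δ * Real.sqrt F := by
    rw [alph, hxval, hF_def]
  -- goal restated
  rw [hαval]
  rcases eq_or_ne δ 0 with h0 | h0
  · rw [hT_def, h0]
    simp [Real.sign_zero]
  -- δ ≠ 0
  have hδpos : 0 < |δ| := abs_pos.2 h0
  -- 1 - m δ ≥ 1/2 where m = (ε-2)/(3(ε-1))
  have hmδ : |(ε-2)/(3*(ε-1)) * δ| ≤ 1/2 := by
    rw [abs_mul]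
    have hm1 : (0:ℝ) < |(ε-2)/(3*(ε-1))| + 1 := by positivity
    calc |(ε-2)/(3*(ε-1))| * |δ| ≤ (|(ε-2)/(3*(ε-1))| + 1) * (1/(2*(|(ε-2)/(3*(ε-1))| + 1))) := by
          apply mul_le_mul (by linarith) hδ3 (abs_nonneg _) (le_of_lt hm1)
      _ = 1/2 := by field_simp [mul_comm]
  obtain ⟨hml, hmr⟩ := abs_le.1 hmδ
  have hTfac : T = s * (δ * (1 - (ε-2)/(3*(ε-1)) * δ)) := by rw [hT_def]; ring
  have hbig : 1 - (ε-2)/(3*(ε-1)) * δ ≥ 1/2 := by linarith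
  clear_value s F T
  -- |α + T| ≥ s/2 |δ|
  have hα2 : (Real.sign δ * Real.sqrt F)^2 = F := by
    rcases lt_or_gt_of_ne h0 with hneg | hpos
    · rw [Real.sign_of_neg hneg]; rw [mul_pow]; rw [Real.sq_sqrt hFnn]; ring
    · rw [Real.sign_of_pos hpos]; rw [mul_pow]; rw [Real.sq_sqrt hFnn]; ring
  have habs : s/2 * |δ| ≤ |Real.sign δ * Real.sqrt F + T| := by
    rcases lt_or_gt_of_ne h0 with hneg | hpos
    · -- δ < 0 : both nonpositive
      rw [Real.sign_of_neg hneg]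
      have hTneg : T ≤ s * (δ/2) := by
        rw [hTfac]
        have : δ * (1 - (ε-2)/(3*(ε-1)) * δ) ≤ δ * (1/2) :=
          mul_le_mul_of_nonpos_left (by linarith) (le_of_lt hneg)
        calc s * (δ * (1 - (ε-2)/(3*(ε-1)) * δ)) ≤ s * (δ * (1/2)) :=
              mul_le_mul_of_nonneg_left this (le_of_lt hs)
          _ = s * (δ/2) := by ring
      have hsd : s * (δ/2) < 0 := mul_neg_of_pos_of_neg hs (by linarith)
      rw [abs_of_nonpos (by linarith [Real.sqrt_nonneg F] : (-1) * Real.sqrt F + T ≤ 0)]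
      rw [abs_of_neg hneg]
      have e : s/2 * -δ = -(s * (δ/2)) := by ring
      rw [e]
      linarith [Real.sqrt_nonneg F]
    · -- δ > 0
      rw [Real.sign_of_pos hpos]
      have hTpos : s * (δ/2) ≤ T := by
        rw [hTfac]
        have : δ * (1/2) ≤ δ * (1 - (ε-2)/(3*(ε-1)) * δ) :=
          mul_le_mul_of_nonneg_left (by linarith) (le_of_lt hpos)
        calc s * (δ/2) = s * (δ * (1/2)) := by ring
          _ ≤ s * (δ * (1 - (ε-2)/(3*(ε-1)) * δ)) := mul_le_mul_of_nonneg_left this (le_of_lt hs)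
      have hsd : 0 < s * (δ/2) := mul_pos hs (by linarith)
      rw [abs_of_pos hpos]
      rw [abs_of_nonneg (by linarith [Real.sqrt_nonneg F] : (0:ℝ) ≤ 1 * Real.sqrt F + T)]
      linarith [Real.sqrt_nonneg F]
  -- now the chain
  set α : ℝ := Real.sign δ * Real.sqrt F with hα_def
  set K' : ℝ := 4*(1+1/(ε-1)^3) + (ε/(ε-1))*((ε-2)/(3*(ε-1)))^2 with hK'_def
  have hK'pos : 0 < K' := by rw [hK'_def]; positivity
  have chain : |α - T| * (s/2 * |δ|) ≤ K' * |δ|^4 := by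
    calc |α - T| * (s/2 * |δ|) ≤ |α - T| * |α + T| :=
          mul_le_mul_of_nonneg_left habs (abs_nonneg _)
      _ = |(α - T) * (α + T)| := (abs_mul _ _).symm
      _ = |F - T^2| := by rw [show (α - T) * (α + T) = α^2 - T^2 from by ring, hα2]
      _ ≤ K' * |δ|^4 := hFT
  rw [show 2*K'/s * |δ|^3 = (K' * |δ|^4) / (s/2 * |δ|) from by field_simp]
  rw [le_div_iff₀ (by positivity)]
  exact chain

set_option maxHeartbeats 1000000 in
/-- With `δ = εx - 1` (so `x = (1+δ)/ε`), as `δ → 0`,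
`α = (ε/(ε-1))^{1/2} δ - (ε/(ε-1))^{1/2} (ε-2) δ²/(3(ε-1)) + O(δ³)`; in particular,
for every `b > 0`, `(α/(εx-1))^b → (ε/(ε-1))^{b/2}` as `x → 1/ε`. -/
theorem alpha_expansion (ε : ℝ) (hε : 1 < ε) :
    ((fun δ : ℝ => alph ε ((1 + δ) / ε)
        - (Real.sqrt (ε / (ε - 1)) * δ
            - Real.sqrt (ε / (ε - 1)) * (ε - 2) * δ ^ 2 / (3 * (ε - 1))))
      =O[𝓝 0] fun δ : ℝ => δ ^ 3) ∧
    (∀ b : ℝ, 0 < b →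
      Tendsto (fun x : ℝ => (alph ε x / (ε * x - 1)) ^ b) (𝓝[≠] (1 / ε))
        (𝓝 ((ε / (ε - 1)) ^ (b / 2)))) := by
  have hε0 : (0:ℝ) < ε := by linarith
  have ha : (0:ℝ) < ε - 1 := by linarith
  obtain ⟨C, hC, r, hr, hbound⟩ := alph_bound hε
  have hs : 0 < Real.sqrt (ε/(ε-1)) := Real.sqrt_pos.2 (by positivity)
  constructor
  · rw [isBigO_iff]
    refine ⟨C, Metric.eventually_nhds_iff.2 ⟨r, hr, fun δ hδ => ?_⟩⟩
    have h : |δ| < r := by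
      rw [Real.dist_eq, sub_zero] at hδ; exact hδ
    have := hbound δ h
    calc ‖alph ε ((1 + δ) / ε) - (Real.sqrt (ε/(ε-1)) * δ
            - Real.sqrt (ε/(ε-1)) * (ε-2) * δ^2 / (3*(ε-1)))‖
        = |alph ε ((1 + δ) / ε) - (Real.sqrt (ε/(ε-1)) * δ
            - Real.sqrt (ε/(ε-1)) * (ε-2) * δ^2 / (3*(ε-1)))| := rfl
      _ ≤ C * |δ|^3 := this
      _ = C * ‖δ^3‖ := by rw [Real.norm_eq_abs, abs_pow]
  · -- limit part
    have hratio : Tendsto (fun δ : ℝ => alph ε ((1+δ)/ε) / δ) (𝓝[≠] (0:ℝ))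
        (𝓝 (Real.sqrt (ε/(ε-1)))) := by
      have hlin : Tendsto (fun δ : ℝ => Real.sqrt (ε/(ε-1))
            - Real.sqrt (ε/(ε-1)) * (ε-2) * δ / (3*(ε-1))) (𝓝 0)
          (𝓝 (Real.sqrt (ε/(ε-1)))) := by
        have hc : Continuous (fun δ : ℝ => Real.sqrt (ε/(ε-1))
            - Real.sqrt (ε/(ε-1)) * (ε-2) * δ / (3*(ε-1))) := by
          apply Continuous.sub continuous_const
          exact (continuous_const.mul continuous_id).div_const _
        have := hc.tendsto 0
        simpa using this
      have herr : Tendsto (fun δ : ℝ => (alph ε ((1+δ)/ε)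
            - (Real.sqrt (ε/(ε-1)) * δ - Real.sqrt (ε/(ε-1)) * (ε-2) * δ^2 / (3*(ε-1)))) / δ)
          (𝓝[≠] (0:ℝ)) (𝓝 0) := by
        apply squeeze_zero_norm' (a := fun δ : ℝ => C * δ^2)
        · have hev : ∀ᶠ δ in 𝓝[≠] (0:ℝ), |δ| < r ∧ δ ≠ 0 := by
            filter_upwards [eventually_nhdsWithin_of_eventually_nhds
              (Metric.eventually_nhds_iff.2 ⟨r, hr, fun δ hδ => by
                rw [Real.dist_eq, sub_zero] at hδ; exact hδ⟩),
              eventually_mem_nhdsWithin] with δ h1 h2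
            exact ⟨h1, h2⟩
          filter_upwards [hev] with δ hδ
          obtain ⟨h1, h2⟩ := hδ
          have hb := hbound δ h1
          have hδpos : 0 < |δ| := abs_pos.2 h2
          rw [Real.norm_eq_abs, abs_div]
          rw [div_le_iff₀ hδpos]
          calc |alph ε ((1+δ)/ε) - (Real.sqrt (ε/(ε-1)) * δ
                - Real.sqrt (ε/(ε-1)) * (ε-2) * δ^2 / (3*(ε-1)))| ≤ C * |δ|^3 := hb
            _ = C * δ^2 * |δ| := by
                rw [show |δ|^3 = |δ|^2 * |δ| from by ring, sq_abs, mul_assoc]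
        · have : Tendsto (fun δ : ℝ => C * δ^2) (𝓝 0) (𝓝 0) := by
            have hc : Continuous (fun δ : ℝ => C * δ^2) := by continuity
            simpa using hc.tendsto 0
          exact this.mono_left nhdsWithin_le_nhds
      have hsum := (hlin.mono_left nhdsWithin_le_nhds).add herr
      rw [add_zero] at hsum
      apply hsum.congr'
      filter_upwards [eventually_mem_nhdsWithin] with δ (hδ : δ ≠ 0)
      field_simp
      ring
    have hsub : Tendsto (fun x : ℝ => ε * x - 1) (𝓝[≠] (1/ε)) (𝓝[≠] (0:ℝ)) := by
      rw [tendsto_nhdsWithin_iff]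
      constructor
      · have hc : Continuous (fun x : ℝ => ε * x - 1) := by continuity
        have := hc.tendsto (1/ε)
        have he : ε * (1/ε) - 1 = 0 := by field_simp; ring
        rw [he] at this
        exact this.mono_left nhdsWithin_le_nhds
      · filter_upwards [eventually_mem_nhdsWithin] with x (hx : x ≠ 1/ε)
        have hne : ε * x - 1 ≠ 0 := by
          intro h
          apply hx
          have h2 : ε * x = 1 := by linarith
          field_simp
          linarith
        exact hne
    have hcomp := hratio.comp hsub
    have hcomp' : Tendsto (fun x : ℝ => alph ε x / (ε * x - 1)) (𝓝[≠] (1/ε))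
        (𝓝 (Real.sqrt (ε/(ε-1)))) := by
      apply hcomp.congr
      intro x
      have : (1 + (ε * x - 1)) / ε = x := by field_simp; ring
      simp only [Function.comp_apply, this]
    intro b hb
    have hrpow : ContinuousAt (fun t : ℝ => t ^ b) (Real.sqrt (ε/(ε-1))) :=
      Real.continuousAt_rpow_const _ b (Or.inl hs.ne')
    have hfinal := hrpow.tendsto.comp hcomp'
    have heq : (Real.sqrt (ε/(ε-1))) ^ b = (ε/(ε-1)) ^ (b/2) := by
      rw [Real.sqrt_eq_rpow, ← Real.rpow_mul (by positivity : (0:ℝ) ≤ ε/(ε-1))]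
      congr 1
      ring
    rw [heq] at hfinal
    exact hfinal
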